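/- Let A₀, A₁, … be a countable family of co-c.e. hyperimmune sets. Then there exists a hyperimmune set B such that for every n, every computable-in-X array tracing Aₙ yields an X-computable array tracing B; in particular, any oracle X relative to which B remains hyperimmune preserves the hyperimmunity of every Aₙ. -/

import Mathlib

open Classical

/-- The characteristic function of a set of naturals, as a partial function. -/
noncomputable def CharFun (X : Set ℕ) : ℕ →. ℕ :=
  fun n => Part.some (if n ∈ X then 1 else 0)

/-- Partial recursiveness relative to an oracle `O`. -/
inductive RecIn (O : ℕ →. ℕ) : (ℕ →. ℕ) → Prop
  | oracle : RecIn O O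
  | zero : RecIn O (fun _ => Part.some 0)
  | succ : RecIn O (fun n => Part.some n.succ)
  | left : RecIn O (fun n => Part.some n.unpair.1)
  | right : RecIn O (fun n => Part.some n.unpair.2)
  | pair {f g} : RecIn O f → RecIn O g →
      RecIn O (fun n => Nat.pair <$> f n <*> g n)
  | comp {f g} : RecIn O f → RecIn O g →
      RecIn O (fun n => g n >>= f)
  | prec {f g} : RecIn O f → RecIn O g →
      RecIn O (Nat.unpaired fun a n =>
        n.rec (f a) fun y IH => do {let i ← IH; g (Nat.pair a (Nat.pair y i))})
  | rfind {f} : RecIn O f →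
      RecIn O (fun a => Nat.rfind fun n => (fun m => decide (m = 0)) <$> f (Nat.pair a n))

/-- A (typed) function is computable in oracle `O`. -/
def OracleComputableIn {α β : Type} [Primcodable α] [Primcodable β] (O : ℕ →. ℕ) (f : α → β) : Prop :=
  RecIn O (fun n => Part.some (Encodable.encode (Option.map f (Encodable.decode (α := α) n))))

/-- A set of naturals is computable in oracle `O`. -/
def SetComputableIn (O : ℕ →. ℕ) (X : Set ℕ) : Prop :=
  RecIn O (CharFun X)

/-- A (typed) predicate is computably enumerable in oracle `O`. -/
def CEIn {α : Type} [Primcodable α] (O : ℕ →. ℕ) (p : α → Prop) : Prop :=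
  ∃ f : ℕ →. ℕ, RecIn O f ∧ ∀ a : α, (f (Encodable.encode a)).Dom ↔ p a

/-- A (typed) predicate is computably enumerable. -/
def CEPred {α : Type} [Primcodable α] (p : α → Prop) : Prop :=
  ∃ f : α →. Unit, Partrec f ∧ ∀ a, (f a).Dom ↔ p a

/-- A set of naturals is co-c.e. -/
def CoCE (A : Set ℕ) : Prop := CEPred (fun n => n ∉ A)

/-- The members of an array are mutually disjoint. -/
def ArrayDisjoint (F : ℕ → Finset ℕ) : Prop :=
  ∀ i j, i ≠ j → Disjoint (F i) (F j)

/-- An array traces a set `A` if each of its members meets `A`. -/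
def Traces (F : ℕ → Finset ℕ) (A : Set ℕ) : Prop :=
  ∀ i, ∃ x ∈ F i, x ∈ A

/-- A set is hyperimmune if it is infinite and not traced by any computable array. -/
def Hyperimmune (A : Set ℕ) : Prop :=
  A.Infinite ∧ ∀ F : ℕ → Finset ℕ, Computable F → ArrayDisjoint F → ¬ Traces F A

/-- A set is hyperimmune relative to the oracle `O`. -/
def HyperimmuneIn (O : ℕ →. ℕ) (A : Set ℕ) : Prop :=
  A.Infinite ∧ ∀ F : ℕ → Finset ℕ, OracleComputableIn O F → ArrayDisjoint F → ¬ Traces F A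

/-- A set is immune if it is infinite and has no infinite computable subset. -/
def Immune (A : Set ℕ) : Prop :=
  A.Infinite ∧ ∀ W : Set ℕ, W.Infinite → ComputablePred (· ∈ W) → ¬ W ⊆ A

/-- A set is immune relative to the oracle `O`. -/
def ImmuneIn (O : ℕ →. ℕ) (A : Set ℕ) : Prop :=
  A.Infinite ∧ ∀ W : Set ℕ, W.Infinite → SetComputableIn O W → ¬ W ⊆ A

/-- The effective join of two sets of naturals. -/
def SetJoin (Y Z : Set ℕ) : Set ℕ :=
  {n | if n % 2 = 0 then n / 2 ∈ Y else n / 2 ∈ Z}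

/-- `X` is Turing reducible to `Z`. -/
def TuringLE (X Z : Set ℕ) : Prop := SetComputableIn (CharFun Z) X

/-! ### Part A: RecIn basics -/

theorem recIn_of_natPartrec {O : ℕ →. ℕ} {f : ℕ →. ℕ} (h : Nat.Partrec f) : RecIn O f := by
  induction h with
  | zero => exact RecIn.zero
  | succ => exact RecIn.succ
  | left => exact RecIn.left
  | right => exact RecIn.right
  | pair _ _ pf pg => exact RecIn.pair pf pg
  | comp _ _ pf pg => exact RecIn.comp pf pg
  | prec _ _ pf pg => exact RecIn.prec pf pg
  | rfind _ pf => exact RecIn.rfind pf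

/-- A total function computable in oracle `O`. -/
def TotRecIn (O : ℕ →. ℕ) (f : ℕ → ℕ) : Prop :=
  RecIn O (fun n => Part.some (f n))

theorem TotRecIn.of_computable {O : ℕ →. ℕ} {f : ℕ → ℕ} (h : Computable f) : TotRecIn O f := by
  have : Nat.Partrec (fun n => Part.some (f n)) := by
    have := Partrec.nat_iff.1 h
    exact this.of_eq (fun n => rfl)
  exact recIn_of_natPartrec this

theorem TotRecIn.comp {O : ℕ →. ℕ} {f g : ℕ → ℕ} (hf : TotRecIn O f) (hg : TotRecIn O g) :
    TotRecIn O (fun n => f (g n)) := by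
  have := RecIn.comp (f := fun n => Part.some (f n)) (g := fun n => Part.some (g n)) hf hg
  have e : (fun n => Part.some (g n) >>= (fun m => Part.some (f m)))
      = fun n => Part.some (f (g n)) := by
    funext n; simp
  rwa [e] at this

theorem TotRecIn.pair {O : ℕ →. ℕ} {f g : ℕ → ℕ} (hf : TotRecIn O f) (hg : TotRecIn O g) :
    TotRecIn O (fun n => Nat.pair (f n) (g n)) := by
  have := RecIn.pair (f := fun n => Part.some (f n)) (g := fun n => Part.some (g n)) hf hg
  have e : (fun n => Nat.pair <$> Part.some (f n) <*> Part.some (g n))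
      = fun n => Part.some (Nat.pair (f n) (g n)) := by
    funext n; simp [Seq.seq]
  rwa [e] at this

/-- Primitive-recursion-style construction: `h 0 = c`, `h (k+1) = f (Nat.pair k (h k))`. -/
theorem TotRecIn.prec1 {O : ℕ →. ℕ} {f : ℕ → ℕ} (c : ℕ) (hf : TotRecIn O f) :
    TotRecIn O (fun k => Nat.rec c (fun y IH => f (Nat.pair y IH)) k) := by
  have hc : TotRecIn O (fun _ => c) := .of_computable (Computable.const c)
  have hg : TotRecIn O (fun m => f m.unpair.2) :=
    hf.comp (.of_computable (Computable.snd.comp Computable.unpair))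
  have H := RecIn.prec (f := fun _ => Part.some c)
      (g := fun m => Part.some (f m.unpair.2)) hc hg
  have hp : TotRecIn O (fun k => Nat.pair 0 k) :=
    TotRecIn.pair (.of_computable (Computable.const 0)) (.of_computable Computable.id)
  have := RecIn.comp H hp
  have e : (fun n => Part.some (Nat.pair 0 n) >>= Nat.unpaired (fun a n =>
        n.rec (Part.some c) fun y IH => do {let i ← IH; Part.some (f (Nat.pair a (Nat.pair y i)).unpair.2)}))
      = fun k => Part.some (Nat.rec c (fun y IH => f (Nat.pair y IH)) k) := by
    funext n
    rw [Part.bind_eq_bind, Part.bind_some]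
    induction n with
    | zero => rfl
    | succ m IH =>
      simp only [Nat.unpaired, Nat.unpair_pair] at IH ⊢
      rw [IH]
      simp
  rwa [e] at this

theorem computableIn_iff_totRecIn {O : ℕ →. ℕ} {β : Type} [Primcodable β] {F : ℕ → β} :
    OracleComputableIn O F ↔ TotRecIn O (fun n => Encodable.encode (F n) + 1) := by
  unfold OracleComputableIn TotRecIn
  constructor <;> intro h <;>
  · have e : (fun n => Part.some (Encodable.encode (Option.map F (Encodable.decode (α := ℕ) n))))
        = fun n => Part.some (Encodable.encode (F n) + 1) := by
      funext n
      simp [Encodable.decode_nat, Encodable.encode_some]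
    first
      | rwa [e] at h
      | rwa [e]

/-! ### Part B: the `Finset ℕ` encoding -/

open Denumerable Encodable

/-- The encoding of `Finset ℕ` used by `OracleComputableIn` and `Computable`. -/
noncomputable def fEnc (s : Finset ℕ) : ℕ :=
  @Encodable.encode (Finset ℕ) (Primcodable.toEncodable) s

theorem add_le_pair (a b : ℕ) : a + b ≤ Nat.pair a b := by
  unfold Nat.pair
  split_ifs with h
  · have hb : 1 ≤ b := Nat.lt_of_le_of_lt (Nat.zero_le a) h
    calc a + b ≤ b * b + a := by nlinarith
    _ = _ := by ring
  · nlinarith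

theorem mem_raise'_le : ∀ (l : List ℕ) (n x : ℕ), x ∈ Denumerable.raise' l n →
    x ≤ n + Encodable.encode l
  | [], _, _, h => by simp [Denumerable.raise'] at h
  | m :: l, n, x, h => by
    rw [Denumerable.raise'] at h
    rcases List.mem_cons.1 h with h | h
    · subst h
      rw [Encodable.encode_list_cons]
      have := Nat.left_le_pair (Encodable.encode m) (Encodable.encode l)
      simp only [Encodable.encode_nat] at this ⊢
      omega
    · have := mem_raise'_le l (m + n + 1) x h
      rw [Encodable.encode_list_cons]
      have h2 := add_le_pair (Encodable.encode m) (Encodable.encode l)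
      simp only [Encodable.encode_nat] at this h2 ⊢
      omega

theorem mem_ofNat_finset {x m : ℕ} :
    x ∈ Denumerable.ofNat (Finset ℕ) m ↔ x ∈ Denumerable.raise' (Denumerable.ofNat (List ℕ) m) 0 := by
  rw [show Denumerable.ofNat (Finset ℕ) m
    = Finset.map (Denumerable.eqv ℕ).symm.toEmbedding
        (Denumerable.raise'Finset (Denumerable.ofNat (List ℕ) m) 0) from rfl]
  simp [Denumerable.raise'Finset, Denumerable.eqv]
  exact Iff.rfl

theorem ofNat_fEnc (s : Finset ℕ) : Denumerable.ofNat (Finset ℕ) (fEnc s) = s :=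
  Denumerable.ofNat_encode s

theorem fEnc_ofNat (m : ℕ) : fEnc (Denumerable.ofNat (Finset ℕ) m) = m :=
  Denumerable.encode_ofNat m

theorem mem_le_fEnc {x : ℕ} {s : Finset ℕ} (h : x ∈ s) : x ≤ fEnc s := by
  have h1 : x ∈ Denumerable.raise' (Denumerable.ofNat (List ℕ) (fEnc s)) 0 := by
    rw [← mem_ofNat_finset, ofNat_fEnc]; exact h
  have := mem_raise'_le _ 0 x h1
  rwa [Denumerable.encode_ofNat, Nat.zero_add] at this

/-! #### Extracting the list of elements from a code -/

/-- Recover the elements of a `Finset ℕ` from the code of its difference list. -/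
def eList (l : List ℕ) : List ℕ :=
  (l.foldl (fun p d => (p.1 ++ [d + p.2], d + p.2 + 1)) (([] : List ℕ), 0)).1

private theorem foldl_raise'_aux : ∀ (l : List ℕ) (res : List ℕ) (n : ℕ),
    (l.foldl (fun p d => (p.1 ++ [d + p.2], d + p.2 + 1)) (res, n)).1
      = res ++ Denumerable.raise' l n := by
  intro l
  induction l with
  | nil => intro res n; simp [Denumerable.raise']
  | cons d t ih =>
    intro res n
    rw [List.foldl_cons, ih]
    rw [Denumerable.raise']
    simp

theorem eList_eq_raise' (l : List ℕ) : eList l = Denumerable.raise' l 0 := by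
  unfold eList
  rw [foldl_raise'_aux]
  simp

theorem mem_eList_fEnc {x : ℕ} {s : Finset ℕ} :
    x ∈ eList (Denumerable.ofNat (List ℕ) (fEnc s)) ↔ x ∈ s := by
  rw [eList_eq_raise', ← mem_ofNat_finset, ofNat_fEnc]

/-! #### Codes of intervals -/

/-- Code of the list `List.replicate m 0`. -/
def zRep (m : ℕ) : ℕ := Nat.rec 0 (fun _ ih => Nat.pair 0 ih + 1) m

theorem encode_replicate_zero (m : ℕ) :
    Encodable.encode (List.replicate m (0 : ℕ)) = zRep m := by
  induction m with
  | zero => rfl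
  | succ k ih => rw [List.replicate_succ, Encodable.encode_list_cons, ih]; rfl

/-- Code of the finset `Finset.Ico a b`. -/
def cIco (a b : ℕ) : ℕ := if b ≤ a then 0 else Nat.pair a (zRep (b - a - 1)) + 1

private theorem raise'_replicate_zero : ∀ (k n : ℕ),
    Denumerable.raise' (List.replicate k 0) n = List.range' n k := by
  intro k
  induction k with
  | zero => intro n; simp [Denumerable.raise', List.range']
  | succ m ih => intro n; rw [List.replicate_succ, Denumerable.raise', ih]; simp [List.range']

theorem ofNat_finset_cIco (a b : ℕ) :
    Denumerable.ofNat (Finset ℕ) (cIco a b) = Finset.Ico a b := by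
  unfold cIco
  split_ifs with h
  · ext x
    rw [mem_ofNat_finset]
    simp only [Denumerable.list_ofNat_zero]
    rw [show Denumerable.raise' ([] : List ℕ) 0 = [] from rfl]
    simp [Finset.mem_Ico]
    omega
  · push_neg at h
    have hc : (Nat.pair a (zRep (b - a - 1)) + 1 : ℕ)
        = Encodable.encode (a :: List.replicate (b - a - 1) (0:ℕ)) := by
      rw [Encodable.encode_list_cons, encode_replicate_zero]
      simp
    ext x
    rw [mem_ofNat_finset, hc, Denumerable.ofNat_encode]
    rw [Denumerable.raise']
    rw [raise'_replicate_zero]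
    simp only [List.mem_cons, List.mem_range'_1, Finset.mem_Ico]
    omega

theorem fEnc_Ico (a b : ℕ) : fEnc (Finset.Ico a b) = cIco a b := by
  rw [← ofNat_finset_cIco, fEnc_ofNat]

/-! ### Part C/D: computability helpers and domination lemmas -/

theorem computable_rfind_total {p : ℕ → ℕ → Bool} (hp : Computable₂ p)
    (H : ∀ x, ∃ y, p x y = true) :
    ∃ g : ℕ → ℕ, Computable g ∧ (∀ x, p x (g x) = true) ∧ ∀ x z, z < g x → p x z = false := by
  have hpr : Partrec₂ (fun (x n : ℕ) => (Part.some (p x n) : Part Bool)) := hp.partrec₂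
  have hrf : Partrec (fun x => Nat.rfind (fun n => (Part.some (p x n) : Part Bool))) :=
    Partrec.rfind hpr
  have hdom : ∀ x, (Nat.rfind (fun n => (Part.some (p x n) : Part Bool))).Dom := by
    intro x
    refine Nat.rfind_dom.2 ?_
    obtain ⟨y, hy⟩ := H x
    exact ⟨y, by simp [hy], fun {m} _ => trivial⟩
  refine ⟨fun x => (Nat.rfind (fun n => (Part.some (p x n) : Part Bool))).get (hdom x),
    hrf.of_eq_tot (fun x => Part.get_mem (hdom x)), fun x => ?_, fun x z hz => ?_⟩
  · have := Nat.rfind_spec (Part.get_mem (hdom x))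
    simpa using this
  · have := Nat.rfind_min (Part.get_mem (hdom x)) hz
    simpa using this

theorem foldl_band_eq_true_iff (q : ℕ → Bool) : ∀ (l : List ℕ) (b : Bool),
    (l.foldl (fun b x => b && q x) b = (b && l.all q)) := by
  intro l
  induction l with
  | nil => intro b; simp
  | cons x t ih => intro b; rw [List.foldl_cons, ih, List.all_cons]; simp [Bool.and_assoc]

/-- Disjointness and tracing for interval arrays. -/
theorem interval_array_spec {S : Set ℕ} (hS : S.Infinite) {h : ℕ → ℕ}
    (hmono : ∀ k, h k < h (k + 1)) (hdom : ∀ k, Nat.nth (· ∈ S) (h k) < h (k + 1)) :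
    ArrayDisjoint (fun k => Finset.Ico (h k) (h (k + 1))) ∧
      Traces (fun k => Finset.Ico (h k) (h (k + 1))) S := by
  have hsm : StrictMono h := strictMono_nat_of_lt_succ hmono
  constructor
  · intro i j hij
    rcases Nat.lt_or_ge i j with hlt | hge
    · rw [Finset.disjoint_left]
      intro x hx1 hx2
      rw [Finset.mem_Ico] at hx1 hx2
      have : h (i + 1) ≤ h j := hsm.monotone (by omega)
      omega
    · have hlt : j < i := lt_of_le_of_ne hge (Ne.symm hij)
      rw [Finset.disjoint_right]
      intro x hx1 hx2
      rw [Finset.mem_Ico] at hx1 hx2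
      have : h (j + 1) ≤ h i := hsm.monotone (by omega)
      omega
  · intro k
    refine ⟨Nat.nth (· ∈ S) (h k), ?_, ?_⟩
    · rw [Finset.mem_Ico]
      exact ⟨Nat.le_nth (fun hf => absurd hf hS), hdom k⟩
    · exact Nat.nth_mem_of_infinite hS (h k)

/-- If a set has `k+1` distinct elements below `m`, then its `k`-th element is at most `m`. -/
theorem nth_le_of_witnesses {S : Set ℕ} {k m : ℕ} (w : ℕ → ℕ)
    (hw : ∀ i, i ≤ k → w i ∈ S ∧ w i ≤ m)
    (hinj : ∀ i j, i ≤ k → j ≤ k → w i = w j → i = j) :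
    Nat.nth (· ∈ S) k ≤ m := by
  have hcount : k < Nat.count (· ∈ S) (m + 1) := by
    rw [Nat.count_eq_card_filter_range]
    have hmap : ∀ i ∈ Finset.range (k + 1), w i ∈ (Finset.range (m + 1)).filter (· ∈ S) := by
      intro i hi
      rw [Finset.mem_range] at hi
      obtain ⟨h1, h2⟩ := hw i (by omega)
      rw [Finset.mem_filter, Finset.mem_range]
      exact ⟨by omega, h1⟩
    have hinj' : Set.InjOn w (Finset.range (k + 1)) := by
      intro i hi j hj hij
      rw [Finset.coe_range, Set.mem_Iio] at hi hj
      exact hinj i j (by omega) (by omega) hij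
    have := Finset.card_le_card_of_injOn w hmap hinj'
    simpa using this
  have := Nat.nth_lt_of_lt_count hcount
  omega

/-- From an array tracing `S`, a pointwise bound for the enumeration of `S`. -/
theorem nth_le_of_array {S : Set ℕ} {K : ℕ → Finset ℕ}
    (hd : ArrayDisjoint K) (ht : Traces K S) {M : ℕ → ℕ}
    (hM : ∀ i k, i ≤ k → fEnc (K i) ≤ M k) (k : ℕ) :
    Nat.nth (· ∈ S) k ≤ M k := by
  choose w hw1 hw2 using ht
  refine nth_le_of_witnesses w (fun i hi => ⟨hw2 i, ?_⟩) (fun i j hi hj hij => ?_)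
  · exact le_trans (mem_le_fEnc (hw1 i)) (hM i k hi)
  · by_contra hne
    have := hd i j hne
    rw [Finset.disjoint_left] at this
    exact this (hw1 i) (hij ▸ hw1 j)

theorem nth_le_nth_of_subset {S T : Set ℕ} (hS : S.Infinite) (hsub : S ⊆ T) (k : ℕ) :
    Nat.nth (· ∈ T) k ≤ Nat.nth (· ∈ S) k := by
  refine nth_le_of_witnesses (fun i => Nat.nth (· ∈ S) i) (fun i hi => ⟨?_, ?_⟩) ?_
  · exact hsub (Nat.nth_mem_of_infinite hS i)
  · exact (Nat.nth_le_nth hS).2 hi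
  · intro i j _ _ hij
    exact Nat.nth_injective hS hij

/-! ### Part E: finite unions of co-c.e. hyperimmune sets are untraceable -/

open Nat.Partrec (Code)
open Nat.Partrec.Code

theorem cePred_and {p q : ℕ → Prop} (hp : CEPred p) (hq : CEPred q) :
    CEPred (fun a => p a ∧ q a) := by
  obtain ⟨f, hf, hfd⟩ := hp
  obtain ⟨g, hg, hgd⟩ := hq
  refine ⟨fun a => (f a).bind (fun _ => g a), ?_, fun a => ?_⟩
  · exact hf.bind ((hg.comp Computable.fst).to₂)
  · constructor
    · rintro ⟨h1, h2⟩
      exact ⟨(hfd a).1 h1, (hgd a).1 h2⟩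
    · rintro ⟨h1, h2⟩
      exact ⟨(hfd a).2 h1, (hgd a).2 h2⟩

theorem cePred_congr {p q : ℕ → Prop} (h : ∀ a, p a ↔ q a) (hp : CEPred p) : CEPred q := by
  obtain ⟨f, hf, hfd⟩ := hp
  exact ⟨f, hf, fun a => (hfd a).trans (h a)⟩

theorem coCE_union (A : ℕ → Set ℕ) (hco : ∀ n, CoCE (A n)) (n : ℕ) :
    CEPred (fun x => ¬ ∃ m ≤ n, x ∈ A m) := by
  induction n with
  | zero =>
    refine cePred_congr (fun a => ?_) (hco 0)
    constructor
    · intro h; rintro ⟨m, hm, hma⟩; interval_cases m; exact h hma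
    · intro h hma; exact h ⟨0, le_refl 0, hma⟩
  | succ k ih =>
    refine cePred_congr (fun a => ?_) (cePred_and ih (hco (k + 1)))
    constructor
    · rintro ⟨h1, h2⟩ ⟨m, hm, hma⟩
      rcases Nat.le_succ_iff.1 hm with hm' | hm'
      · exact h1 ⟨m, hm', hma⟩
      · rw [hm'] at hma; exact h2 hma
    · intro h
      exact ⟨fun ⟨m, hm, hma⟩ => h ⟨m, le_trans hm (Nat.le_succ k), hma⟩,
        fun hma => h ⟨k + 1, le_refl _, hma⟩⟩

/-- A code semideciding the complement of a co-c.e. set. -/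
theorem cePred_code {p : ℕ → Prop} (h : CEPred p) :
    ∃ c : Code, ∀ x, p x ↔ (eval c x).Dom := by
  obtain ⟨f, hf, hfd⟩ := h
  have hf' : Partrec (fun a => (f a).map (fun _ => (0 : ℕ))) :=
    hf.map ((Computable.const 0).comp Computable.fst).to₂
  have : Nat.Partrec (fun a => (f a).map (fun _ => (0 : ℕ))) := Partrec.nat_iff.1 hf'
  obtain ⟨c, hc⟩ := exists_code.1 this
  refine ⟨c, fun x => ?_⟩
  rw [hc]
  rw [← hfd x]
  exact Iff.rfl

/-- Uniform stage for finitely many converging computations. -/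
theorem uniform_stage (c : Code) : ∀ l : List ℕ, (∀ x ∈ l, (eval c x).Dom) →
    ∃ s, ∀ x ∈ l, (evaln s c x).isSome = true
  | [], _ => ⟨0, by simp⟩
  | a :: l, h => by
    obtain ⟨s₁, hs₁⟩ := uniform_stage c l (fun x hx => h x (List.mem_cons_of_mem a hx))
    have ha : (eval c a).Dom := h a List.mem_cons_self
    rw [Part.dom_iff_mem] at ha
    obtain ⟨y, hy⟩ := ha
    obtain ⟨s₂, hs₂⟩ := evaln_complete.1 hy
    refine ⟨max s₁ s₂, fun x hx => ?_⟩
    rcases List.mem_cons.1 hx with rfl | hx'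
    · have := evaln_mono (le_max_right s₁ s₂) hs₂
      rw [Option.isSome_iff_exists]; exact ⟨y, this⟩
    · have := hs₁ x hx'
      rw [Option.isSome_iff_exists] at this ⊢
      obtain ⟨y', hy'⟩ := this
      exact ⟨y', evaln_mono (le_max_left s₁ s₂) hy'⟩

/-- Primitive recursiveness of element-list extraction. -/
theorem primrec_eListOfNat : Primrec (fun d => eList (Denumerable.ofNat (List ℕ) d)) := by
  have h1 : Primrec (fun d => Denumerable.ofNat (List ℕ) d) := Primrec.ofNat (List ℕ)
  have hstep : Primrec₂ (fun (_ : ℕ) (p : (List ℕ × ℕ) × ℕ) =>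
      ((p.1.1 ++ [p.2 + p.1.2], p.2 + p.1.2 + 1) : List ℕ × ℕ)) := by
    have hsum : Primrec (fun (p : ℕ × ((List ℕ × ℕ) × ℕ)) => p.2.2 + p.2.1.2) :=
      Primrec.nat_add.comp (Primrec.snd.comp Primrec.snd)
        (Primrec.snd.comp (Primrec.fst.comp Primrec.snd))
    have : Primrec (fun (p : ℕ × ((List ℕ × ℕ) × ℕ)) =>
        ((p.2.1.1 ++ [p.2.2 + p.2.1.2], p.2.2 + p.2.1.2 + 1) : List ℕ × ℕ)) := by
      refine Primrec.pair ?_ (Primrec.succ.comp hsum)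
      refine Primrec.list_append.comp (Primrec.fst.comp (Primrec.fst.comp Primrec.snd)) ?_
      exact Primrec.list_cons.comp hsum (Primrec.const [])
    exact this
  have H := Primrec.list_foldl h1 (Primrec.const (([] : List ℕ), 0)) hstep
  exact (Primrec.fst.comp H).of_eq (fun d => rfl)

/-- The "all elements are certified" predicate, as a `Bool`. -/
def certAll (c : Code) (d s : ℕ) : Bool :=
  (eList (Denumerable.ofNat (List ℕ) d)).foldl (fun b x => b && (evaln s c x).isSome) true

theorem primrec_certAll (c : Code) : Primrec₂ (certAll c) := by
  have hstep : Primrec₂ (fun (q : ℕ × ℕ) (p : Bool × ℕ) =>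
      (p.1 && (evaln q.2 c p.2).isSome : Bool)) := by
    have hev : Primrec (fun (p : (ℕ × ℕ) × Bool × ℕ) => evaln p.1.2 c p.2.2) := by
      have := primrec_evaln
      exact this.comp (Primrec.pair (Primrec.pair (Primrec.snd.comp Primrec.fst)
        (Primrec.const c)) (Primrec.snd.comp Primrec.snd))
    have : Primrec (fun (p : (ℕ × ℕ) × Bool × ℕ) =>
        (p.2.1 && (evaln p.1.2 c p.2.2).isSome : Bool)) :=
      (Primrec.dom_bool₂ (· && ·)).comp (Primrec.fst.comp Primrec.snd)
        (Primrec.option_isSome.comp hev)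
    exact this
  have H := Primrec.list_foldl (primrec_eListOfNat.comp Primrec.fst)
    (Primrec.const true) hstep
  exact Primrec.to₂ (H.of_eq fun q => rfl)

theorem certAll_iff (c : Code) (K : Finset ℕ) (s : ℕ) :
    certAll c (fEnc K) s = true ↔ ∀ x ∈ K, (evaln s c x).isSome = true := by
  unfold certAll
  rw [foldl_band_eq_true_iff]
  simp only [Bool.true_and]
  rw [List.all_eq_true]
  constructor
  · intro h x hx
    exact h x (mem_eList_fEnc.2 hx)
  · intro h x hx
    exact h x (mem_eList_fEnc.1 hx)

/-- Finite unions of co-c.e. hyperimmune sets cannot be traced by computable arrays. -/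
theorem union_untraceable (A : ℕ → Set ℕ) (hco : ∀ n, CoCE (A n)) (hhyp : ∀ n, Hyperimmune (A n)) :
    ∀ n, ∀ K : ℕ → Finset ℕ, Computable K → ArrayDisjoint K →
      ¬ Traces K {x | ∃ m ≤ n, x ∈ A m} := by
  intro n
  induction n with
  | zero =>
    intro K hK hd ht
    refine (hhyp 0).2 K hK hd ?_
    intro i
    obtain ⟨x, hx, hxA⟩ := ht i
    obtain ⟨m, hm, hma⟩ := hxA
    interval_cases m
    exact ⟨x, hx, hma⟩
  | succ n ih =>
    intro K hK hd ht
    set V : Set ℕ := {x | ∃ m ≤ n, x ∈ A m} with hV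
    by_cases hcase : ∀ N, ∃ i, N ≤ i ∧ ∀ x ∈ K i, x ∉ V
    · -- build a computable subfamily tracing `A (n+1)`
      obtain ⟨c, hc⟩ := cePred_code (coCE_union A hco n)
      -- `x ∉ V ↔ (eval c x).Dom`
      have hcV : ∀ x, x ∉ V ↔ (eval c x).Dom := fun x => hc x
      have hKenc : Computable (fun i => fEnc (K i)) := Computable.encode.comp hK
      -- the search predicate
      set p : ℕ → ℕ → Bool := fun prev m =>
        (decide (prev < (Nat.unpair m).1)) && certAll c (fEnc (K (Nat.unpair m).1)) (Nat.unpair m).2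
        with hp
      have hpcomp : Computable₂ p := by
        have h1 : Computable (fun (q : ℕ × ℕ) => decide (q.1 < (Nat.unpair q.2).1)) := by
          have : PrimrecRel (fun (a : ℕ × ℕ) (b : Unit) => a.1 < (Nat.unpair a.2).1) := by
            exact (Primrec.nat_lt.comp (Primrec.fst.comp Primrec.fst)
              ((Primrec.fst.comp (Primrec.unpair.comp (Primrec.snd.comp Primrec.fst)))))
          exact (this.comp Primrec.id (Primrec.const ())).decide.to_comp
        have h2 : Computable (fun (q : ℕ × ℕ) =>
            certAll c (fEnc (K (Nat.unpair q.2).1)) (Nat.unpair q.2).2) := by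
          have hK1 : Computable (fun (q : ℕ × ℕ) => fEnc (K (Nat.unpair q.2).1)) :=
            hKenc.comp ((Primrec.fst.comp (Primrec.unpair.comp Primrec.snd)).to_comp)
          exact ((primrec_certAll c).to_comp).comp hK1
            ((Primrec.snd.comp (Primrec.unpair.comp Primrec.snd)).to_comp)
        exact Computable₂.mk (((Primrec.dom_bool₂ (· && ·)).to_comp).comp h1 h2)
      have htotal : ∀ prev, ∃ m, p prev m = true := by
        intro prev
        obtain ⟨i, hi, hgood⟩ := hcase (prev + 1)
        have hdom : ∀ x ∈ K i, (eval c x).Dom := fun x hx => (hcV x).1 (hgood x hx)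
        have : ∀ x ∈ eList (Denumerable.ofNat (List ℕ) (fEnc (K i))), (eval c x).Dom :=
          fun x hx => hdom x (mem_eList_fEnc.1 hx)
        obtain ⟨s, hs⟩ := uniform_stage c _ this
        refine ⟨Nat.pair i s, ?_⟩
        rw [hp]
        simp only [Nat.unpair_pair]
        rw [Bool.and_eq_true, decide_eq_true_iff]
        refine ⟨by omega, ?_⟩
        rw [certAll_iff]
        intro x hx
        exact hs x (mem_eList_fEnc.2 hx)
      obtain ⟨nu, hnu, hnuspec, _⟩ := computable_rfind_total hpcomp htotal
      -- selection function
      set sel : ℕ → ℕ := fun k =>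
        Nat.rec ((Nat.unpair (nu 0)).1) (fun _ ih => (Nat.unpair (nu ih)).1) k with hsel
      have hselc : Computable sel := by
        have hstep : Computable (fun q => (Nat.unpair (nu q)).1) :=
          (Primrec.fst.comp Primrec.unpair).to_comp.comp hnu
        exact Computable.nat_rec Computable.id (Computable.const ((Nat.unpair (nu 0)).1))
          ((hstep.comp (Computable.snd.comp Computable.snd)).to₂)
      have hgood : ∀ prev, prev < (Nat.unpair (nu prev)).1 ∧
          ∀ x ∈ K (Nat.unpair (nu prev)).1, x ∉ V := by
        intro prev
        have := hnuspec prev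
        rw [hp, Bool.and_eq_true, decide_eq_true_iff] at this
        obtain ⟨h1, h2⟩ := this
        rw [certAll_iff] at h2
        refine ⟨h1, fun x hx => ?_⟩
        rw [hcV x, Part.dom_iff_mem]
        have := h2 x hx
        rw [Option.isSome_iff_exists] at this
        obtain ⟨y, hy⟩ := this
        exact ⟨y, evaln_sound hy⟩
      have hselmono : StrictMono sel := by
        apply strictMono_nat_of_lt_succ
        intro k
        exact (hgood (sel k)).1
      have hselgood : ∀ k, ∀ x ∈ K (sel k), x ∉ V := by
        intro k
        cases k with
        | zero => exact (hgood 0).2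
        | succ j => exact (hgood (sel j)).2
      refine (hhyp (n + 1)).2 (fun k => K (sel k)) (hK.comp hselc)
        (fun i j hij => hd (sel i) (sel j) (fun h => hij (hselmono.injective h))) ?_
      intro k
      obtain ⟨x, hx, hxU⟩ := ht (sel k)
      refine ⟨x, hx, ?_⟩
      obtain ⟨m, hm, hma⟩ := hxU
      rcases Nat.le_succ_iff.1 hm with hm' | hm'
      · exact absurd ⟨m, hm', hma⟩ (hselgood k x hx)
      · rw [hm'] at hma; exact hma
    · -- cofinitely many members meet `V`; drop finitely many and trace `V`
      push_neg at hcase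
      obtain ⟨N, hN⟩ := hcase
      have haddc : Computable (fun k : ℕ => k + N) :=
        (Primrec.nat_add.comp Primrec.id (Primrec.const N)).to_comp
      refine ih (fun k => K (k + N)) (hK.comp haddc)
        (fun i j hij => hd (i + N) (j + N) (by omega)) ?_
      intro k
      obtain ⟨x, hx, hxV⟩ := hN (k + N) (by omega)
      exact ⟨x, hx, hxV⟩

/-! ### Part F: recursion/arithmetic closure helpers -/

theorem TotRecIn.of_eq {O : ℕ →. ℕ} {f g : ℕ → ℕ} (hf : TotRecIn O f) (H : ∀ n, f n = g n) :
    TotRecIn O g := by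
  have : f = g := funext H
  rwa [this] at hf

theorem TotRecIn.max2 {O : ℕ →. ℕ} {f g : ℕ → ℕ} (hf : TotRecIn O f) (hg : TotRecIn O g) :
    TotRecIn O (fun n => max (f n) (g n)) := by
  have hm : Computable (fun m : ℕ => max (Nat.unpair m).1 (Nat.unpair m).2) :=
    (Primrec.nat_max.comp (Primrec.fst.comp Primrec.unpair)
      (Primrec.snd.comp Primrec.unpair)).to_comp
  exact ((TotRecIn.of_computable hm).comp (hf.pair hg)).of_eq (fun n => by simp)

theorem TotRecIn.add2 {O : ℕ →. ℕ} {f g : ℕ → ℕ} (hf : TotRecIn O f) (hg : TotRecIn O g) :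
    TotRecIn O (fun n => f n + g n) := by
  have hm : Computable (fun m : ℕ => (Nat.unpair m).1 + (Nat.unpair m).2) :=
    (Primrec.nat_add.comp (Primrec.fst.comp Primrec.unpair)
      (Primrec.snd.comp Primrec.unpair)).to_comp
  exact ((TotRecIn.of_computable hm).comp (hf.pair hg)).of_eq (fun n => by simp)

/-- Recursive definitions, oracle version. -/
theorem totRecIn_rec {O : ℕ →. ℕ} (c : ℕ) {f : ℕ → ℕ} (hf : TotRecIn O f) :
    ∃ h : ℕ → ℕ, TotRecIn O h ∧ h 0 = c ∧ ∀ k, h (k + 1) = f (Nat.pair k (h k)) :=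
  ⟨_, TotRecIn.prec1 c hf, rfl, fun _ => rfl⟩

/-- Recursive definitions, computable version. -/
theorem computable_rec (c : ℕ) {f : ℕ → ℕ} (hf : Computable f) :
    ∃ h : ℕ → ℕ, Computable h ∧ h 0 = c ∧ ∀ k, h (k + 1) = f (Nat.pair k (h k)) := by
  refine ⟨fun k => Nat.rec c (fun y IH => f (Nat.pair y IH)) k, ?_, rfl, fun _ => rfl⟩
  exact Computable.nat_rec Computable.id (Computable.const c)
    ((hf.comp ((Primrec₂.natPair.comp (Primrec.fst.comp Primrec.snd)
      (Primrec.snd.comp Primrec.snd)).to_comp)).to₂)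

theorem rec_max_bound {M u : ℕ → ℕ} (h0 : M 0 = u 0)
    (hs : ∀ k, M (k + 1) = max (M k) (u (k + 1))) : ∀ k i, i ≤ k → u i ≤ M k := by
  intro k
  induction k with
  | zero => intro i hi; interval_cases i; omega
  | succ m ih =>
    intro i hi
    rcases Nat.le_succ_iff.1 hi with h | h
    · exact le_trans (ih i h) (by rw [hs m]; omega)
    · subst h; rw [hs m]; exact le_max_right _ _

/-! #### Primitive recursiveness of interval codes -/

theorem primrec_zRep : Primrec zRep := by
  have : Primrec₂ (fun (_ ih : ℕ) => Nat.pair 0 ih + 1) := by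
    have : Primrec (fun p : ℕ × ℕ => Nat.pair 0 p.2 + 1) :=
      Primrec.succ.comp (Primrec₂.natPair.comp (Primrec.const 0) Primrec.snd)
    exact this
  exact Primrec.nat_rec₁ 0 this

theorem primrec_cIco : Primrec (fun p : ℕ × ℕ => cIco p.1 p.2) := by
  unfold cIco
  refine Primrec.ite (Primrec.nat_le.comp Primrec.snd Primrec.fst) (Primrec.const 0) ?_
  refine Primrec.succ.comp (Primrec₂.natPair.comp Primrec.fst
    (primrec_zRep.comp ?_))
  exact Primrec.nat_sub.comp (Primrec.nat_sub.comp Primrec.snd Primrec.fst) (Primrec.const 1)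

/-- Interval arrays are computable (plain version). -/
theorem computable_Ico_array {h : ℕ → ℕ} (hh : Computable h) :
    Computable (fun k => Finset.Ico (h k) (h (k + 1))) := by
  have h1 : Computable (fun k => cIco (h k) (h (k + 1))) :=
    primrec_cIco.to_comp.comp (Computable.pair hh (hh.comp Computable.succ))
  have h2 : Computable (fun k => Denumerable.ofNat (Finset ℕ) (cIco (h k) (h (k + 1)))) :=
    (Primrec.ofNat (Finset ℕ)).to_comp.comp h1
  exact h2.of_eq (fun k => ofNat_finset_cIco _ _)

/-- Interval arrays are computable (oracle version). -/
theorem computableIn_Ico_array {O : ℕ →. ℕ} {h : ℕ → ℕ} (hh : TotRecIn O h) :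
    OracleComputableIn O (fun k => Finset.Ico (h k) (h (k + 1))) := by
  rw [computableIn_iff_totRecIn]
  have h1 : TotRecIn O (fun k => cIco (h k) (h (k + 1))) := by
    have hcomp : TotRecIn O (fun k => (fun m : ℕ => cIco (Nat.unpair m).1 (Nat.unpair m).2)
        (Nat.pair (h k) (h (Nat.succ k)))) :=
      TotRecIn.comp (TotRecIn.of_computable (primrec_cIco.comp Primrec.unpair).to_comp)
        (hh.pair (hh.comp (TotRecIn.of_computable Computable.succ)))
    exact hcomp.of_eq (fun k => by simp)
  have h2 : TotRecIn O (fun k => fEnc (Finset.Ico (h k) (h (k + 1)))) :=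
    h1.of_eq (fun k => (fEnc_Ico _ _).symm)
  exact h2.add2 (TotRecIn.of_computable (Computable.const 1))

/-! #### The enumeration of partial computable functions as total functions -/

open Nat.Partrec.Code in
/-- A (noncomputable) total enumeration covering all computable functions. -/
noncomputable def geFun (e : ℕ) (x : ℕ) : ℕ :=
  if h : ((Denumerable.ofNat Nat.Partrec.Code e).eval x).Dom
  then ((Denumerable.ofNat Nat.Partrec.Code e).eval x).get h else 0

theorem geFun_covers {g : ℕ → ℕ} (hg : Computable g) : ∃ e, ∀ x, geFun e x = g x := by
  have h1 : Nat.Partrec (fun n => Part.some (g n)) :=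
    (Partrec.nat_iff.1 hg).of_eq (fun n => rfl)
  obtain ⟨c, hc⟩ := Nat.Partrec.Code.exists_code.1 h1
  refine ⟨Encodable.encode c, fun x => ?_⟩
  unfold geFun
  rw [Denumerable.ofNat_encode, hc]
  simp

/-! ### Part G: the combined hyperimmune set -/

theorem nth_range_strictMono {f : ℕ → ℕ} (hf : StrictMono f) (k : ℕ) :
    Nat.nth (fun x => ∃ i, f i = x) k = f k := by
  have hcount : Nat.count (fun x => ∃ i, f i = x) (f k) = k := by
    rw [Nat.count_eq_card_filter_range]
    have : (Finset.range (f k)).filter (fun x => ∃ i, f i = x)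
        = (Finset.range k).image f := by
      ext x
      simp only [Finset.mem_filter, Finset.mem_range, Finset.mem_image]
      constructor
      · rintro ⟨hlt, i, rfl⟩
        exact ⟨i, hf.lt_iff_lt.1 hlt, rfl⟩
      · rintro ⟨i, hik, rfl⟩
        exact ⟨hf.lt_iff_lt.2 hik, i, rfl⟩
    rw [this, Finset.card_image_of_injective _ hf.injective, Finset.card_range]
  have := Nat.nth_count (p := fun x => ∃ i, f i = x) (n := f k) ⟨k, rfl⟩
  rw [hcount] at this
  exact this

section Construction

variable (A : ℕ → Set ℕ)

/-- The union of the first `n+1` sets. -/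
def UnS (n : ℕ) : Set ℕ := {x | ∃ m ≤ n, x ∈ A m}

/-- Starting indices of the levels. -/
noncomputable def klev : ℕ → ℕ
  | 0 => 0
  | n + 1 =>
      (if h : ∃ k, klev n ≤ k ∧ geFun n k < Nat.nth (· ∈ UnS A n) k
       then Classical.choose h else klev n) + 1

/-- The level of an index. -/
noncomputable def lev (k : ℕ) : ℕ := Nat.findGreatest (fun n => klev A n ≤ k) k

/-- The slow diagonal enumeration. -/
noncomputable def bseq : ℕ → ℕ
  | 0 => Nat.nth (· ∈ UnS A (lev A 0)) 0
  | k + 1 => max (bseq k + 1) (Nat.nth (· ∈ UnS A (lev A (k + 1))) (k + 1))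

/-- The combined set. -/
def BSet : Set ℕ := {x | ∃ k, bseq A k = x}

variable {A}

theorem subset_UnS {n m : ℕ} (h : n ≤ m) : A n ⊆ UnS A m := fun x hx => ⟨n, h, hx⟩

theorem UnS_infinite (hhyp : ∀ n, Hyperimmune (A n)) (n : ℕ) : (UnS A n).Infinite :=
  Set.Infinite.mono (subset_UnS (Nat.zero_le n)) (hhyp 0).1

theorem klev_lt (n : ℕ) : klev A n < klev A (n + 1) := by
  rw [show klev A (n + 1)
    = (if h : ∃ k, klev A n ≤ k ∧ geFun n k < Nat.nth (· ∈ UnS A n) k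
       then Classical.choose h else klev A n) + 1 from rfl]
  split_ifs with h
  · have := (Classical.choose_spec h).1
    omega
  · omega

theorem klev_strictMono : StrictMono (klev A) := strictMono_nat_of_lt_succ klev_lt

theorem klev_ge_id (n : ℕ) : n ≤ klev A n := by
  induction n with
  | zero => exact Nat.zero_le _
  | succ m ih => have := klev_lt (A := A) m; omega

theorem klev_lev_le (k : ℕ) : klev A (lev A k) ≤ k := by
  exact Nat.findGreatest_spec (P := fun n => klev A n ≤ k) (Nat.zero_le k)
    (show klev A 0 ≤ k from Nat.zero_le k)

theorem le_lev {n k : ℕ} (h : klev A n ≤ k) : n ≤ lev A k :=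
  Nat.le_findGreatest (le_trans (klev_ge_id n) h) h

theorem lev_eq {e k : ℕ} (h1 : klev A e ≤ k) (h2 : k < klev A (e + 1)) : lev A k = e := by
  refine le_antisymm ?_ (le_lev h1)
  by_contra hc
  push_neg at hc
  have h3 : klev A (e + 1) ≤ klev A (lev A k) := klev_strictMono.monotone hc
  have h4 := klev_lev_le (A := A) k
  omega

theorem bseq_strictMono : StrictMono (bseq A) := by
  apply strictMono_nat_of_lt_succ
  intro k
  rw [show bseq A (k + 1)
    = max (bseq A k + 1) (Nat.nth (· ∈ UnS A (lev A (k + 1))) (k + 1)) from rfl]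
  omega

theorem bseq_ge_nth (k : ℕ) : Nat.nth (· ∈ UnS A (lev A k)) k ≤ bseq A k := by
  cases k with
  | zero => exact le_refl _
  | succ m =>
    rw [show bseq A (m + 1)
      = max (bseq A m + 1) (Nat.nth (· ∈ UnS A (lev A (m + 1))) (m + 1)) from rfl]
    omega

theorem bseq_le (hhyp : ∀ n, Hyperimmune (A n)) (n : ℕ) :
    ∀ k, klev A n ≤ k →
      bseq A k ≤ bseq A (klev A n) + k + Nat.nth (· ∈ A n) k := by
  intro k
  induction k with
  | zero =>
    intro h
    have h0 : klev A n = 0 := Nat.le_antisymm h (Nat.zero_le _)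
    rw [h0]
    omega
  | succ m ih =>
    intro h
    rcases Nat.lt_or_ge (klev A n) (m + 1) with hlt | hge
    · rw [show bseq A (m + 1)
        = max (bseq A m + 1) (Nat.nth (· ∈ UnS A (lev A (m + 1))) (m + 1)) from rfl]
      have hsub : Nat.nth (· ∈ UnS A (lev A (m + 1))) (m + 1) ≤ Nat.nth (· ∈ A n) (m + 1) := by
        refine nth_le_nth_of_subset (hhyp n).1 (subset_UnS ?_) (m + 1)
        exact le_lev h
      have hm : klev A n ≤ m := by omega
      have h1 := ih hm
      have hmono : Nat.nth (· ∈ A n) m ≤ Nat.nth (· ∈ A n) (m + 1) :=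
        Nat.nth_monotone (hhyp n).1 (Nat.le_succ m)
      omega
    · have heq : klev A n = m + 1 := Nat.le_antisymm h hge
      rw [← heq]
      omega

theorem nth_BSet (k : ℕ) : Nat.nth (· ∈ BSet A) k = bseq A k :=
  nth_range_strictMono bseq_strictMono k

theorem BSet_infinite : (BSet A).Infinite :=
  Set.infinite_of_injective_forall_mem (f := bseq A) bseq_strictMono.injective
    (fun k => ⟨k, rfl⟩)

/-- Escape: no computable function dominates the enumeration of a finite union. -/
theorem exists_escape (hco : ∀ n, CoCE (A n)) (hhyp : ∀ n, Hyperimmune (A n)) (e : ℕ)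
    {g : ℕ → ℕ} (hg : Computable g) (B0 : ℕ) :
    ∃ k, B0 ≤ k ∧ g k < Nat.nth (· ∈ UnS A e) k := by
  by_contra hnot
  push_neg at hnot
  have hnot' : ∀ k, B0 ≤ k → Nat.nth (· ∈ UnS A e) k ≤ g k := fun k hk => hnot k hk
  set C := Nat.nth (· ∈ UnS A e) B0 with hC
  have hUinf := UnS_infinite hhyp e
  have hdom : ∀ k, Nat.nth (· ∈ UnS A e) k ≤ g k + C := by
    intro k
    rcases Nat.lt_or_ge k B0 with hlt | hge
    · have hmn : Nat.nth (· ∈ UnS A e) k ≤ Nat.nth (· ∈ UnS A e) B0 :=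
        Nat.nth_monotone hUinf (le_of_lt hlt)
      omega
    · have := hnot' k hge
      omega
  have hfc : Computable (fun m : ℕ => max ((Nat.unpair m).2 + 1) (g (Nat.unpair m).2 + C + 1)) := by
    have h1 : Computable (fun m : ℕ => (Nat.unpair m).2) :=
      (Primrec.snd.comp Primrec.unpair).to_comp
    have h2 : Computable (fun m : ℕ => (Nat.unpair m).2 + 1) := Computable.succ.comp h1
    have h3 : Computable (fun m : ℕ => g (Nat.unpair m).2 + C + 1) :=
      Computable.succ.comp ((Primrec.nat_add.to_comp).comp (hg.comp h1) (Computable.const C))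
    exact (Primrec.nat_max.to_comp).comp h2 h3
  obtain ⟨h, hh, h0, hsucc⟩ := computable_rec 0 hfc
  have hmono : ∀ k, h k < h (k + 1) := by
    intro k; rw [hsucc k]; simp only [Nat.unpair_pair]; omega
  have hd : ∀ k, Nat.nth (· ∈ UnS A e) (h k) < h (k + 1) := by
    intro k
    have := hdom (h k)
    rw [hsucc k]; simp only [Nat.unpair_pair]
    omega
  obtain ⟨hdisj, htr⟩ := interval_array_spec hUinf hmono hd
  exact union_untraceable A hco hhyp e _ (computable_Ico_array hh) hdisj htr

/-- The combined set is hyperimmune. -/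
theorem BSet_hyperimmune (hco : ∀ n, CoCE (A n)) (hhyp : ∀ n, Hyperimmune (A n)) :
    Hyperimmune (BSet A) := by
  refine ⟨BSet_infinite, fun K hK hd ht => ?_⟩
  -- a computable bound from the array
  have heK : Computable (fun i => fEnc (K i)) := Computable.encode.comp hK
  have hfc : Computable (fun m : ℕ => max (Nat.unpair m).2 (fEnc (K ((Nat.unpair m).1 + 1)))) := by
    have h1 : Computable (fun m : ℕ => (Nat.unpair m).2) :=
      (Primrec.snd.comp Primrec.unpair).to_comp
    have h2 : Computable (fun m : ℕ => fEnc (K ((Nat.unpair m).1 + 1))) :=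
      heK.comp (Computable.succ.comp ((Primrec.fst.comp Primrec.unpair).to_comp))
    exact (Primrec.nat_max.to_comp).comp h1 h2
  obtain ⟨M, hM, hM0, hMsucc⟩ := computable_rec (fEnc (K 0)) hfc
  have hMb : ∀ i k, i ≤ k → fEnc (K i) ≤ M k := by
    intro i k hik
    refine rec_max_bound (u := fun i => fEnc (K i)) hM0 (fun k => ?_) k i hik
    rw [hMsucc k]; simp
  have hdomB : ∀ k, bseq A k ≤ M k := by
    intro k
    have := nth_le_of_array hd ht hMb k
    rwa [nth_BSet] at this
  obtain ⟨e, hge⟩ := geFun_covers hM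
  have hex : ∃ k, klev A e ≤ k ∧ geFun e k < Nat.nth (· ∈ UnS A e) k := by
    obtain ⟨k, hk1, hk2⟩ := exists_escape hco hhyp e hM (klev A e)
    exact ⟨k, hk1, by rw [hge]; exact hk2⟩
  -- the construction of `klev` diagonalized against `geFun e` at level `e`
  have hkl : klev A (e + 1) = Classical.choose hex + 1 := by
    rw [show klev A (e + 1)
      = (if h : ∃ k, klev A e ≤ k ∧ geFun e k < Nat.nth (· ∈ UnS A e) k
         then Classical.choose h else klev A e) + 1 from rfl]
    rw [dif_pos hex]
  obtain ⟨hc1, hc2⟩ := Classical.choose_spec hex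
  set kc := Classical.choose hex with hkc
  have hlev : lev A kc = e := lev_eq hc1 (by omega)
  have h1 : Nat.nth (· ∈ UnS A e) kc ≤ bseq A kc := by
    have := bseq_ge_nth (A := A) kc
    rwa [hlev] at this
  have h2 := hdomB kc
  rw [hge] at hc2
  omega

/-- Transfer of tracing to the combined set, relative to any oracle. -/
theorem BSet_transfer (hhyp : ∀ n, Hyperimmune (A n)) (O : ℕ →. ℕ) (n : ℕ)
    {F : ℕ → Finset ℕ} (hF : OracleComputableIn O F) (hd : ArrayDisjoint F)
    (ht : Traces F (A n)) :
    ∃ G : ℕ → Finset ℕ, OracleComputableIn O G ∧ ArrayDisjoint G ∧ Traces G (BSet A) := by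
  have hFC : TotRecIn O (fun i => fEnc (F i) + 1) := computableIn_iff_totRecIn.1 hF
  have heF : TotRecIn O (fun i => fEnc (F i)) := by
    have hp : TotRecIn O (fun x : ℕ => x - 1) :=
      TotRecIn.of_computable ((Primrec.nat_sub.comp Primrec.id (Primrec.const 1)).to_comp)
    exact (hp.comp hFC).of_eq (fun i => by omega)
  -- the running maximum
  have hstep : TotRecIn O (fun m : ℕ => max (Nat.unpair m).2 (fEnc (F ((Nat.unpair m).1 + 1)))) := by
    have h1 : TotRecIn O (fun m : ℕ => (Nat.unpair m).2) :=
      TotRecIn.of_computable ((Primrec.snd.comp Primrec.unpair).to_comp)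
    have h2 : TotRecIn O (fun m : ℕ => fEnc (F ((Nat.unpair m).1 + 1))) :=
      heF.comp (TotRecIn.of_computable
        ((Primrec.succ.comp (Primrec.fst.comp Primrec.unpair)).to_comp))
    exact h1.max2 h2
  obtain ⟨M, hM, hM0, hMsucc⟩ := totRecIn_rec (fEnc (F 0)) hstep
  have hMb : ∀ i k, i ≤ k → fEnc (F i) ≤ M k := by
    intro i k hik
    refine rec_max_bound (u := fun i => fEnc (F i)) hM0 (fun k => ?_) k i hik
    rw [hMsucc k]; simp
  have hnth : ∀ k, Nat.nth (· ∈ A n) k ≤ M k := nth_le_of_array hd ht hMb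
  -- a dominator for `bseq`
  set C := bseq A (klev A n) with hCdef
  have hD : TotRecIn O (fun k => M k + k + C) := by
    have h1 : TotRecIn O (fun k => M k + k) :=
      hM.add2 (TotRecIn.of_computable Computable.id)
    exact h1.add2 (TotRecIn.of_computable (Computable.const C))
  have hDdom : ∀ k, bseq A k ≤ M k + k + C := by
    intro k
    rcases Nat.lt_or_ge k (klev A n) with hlt | hge
    · have h1 : bseq A k ≤ C := (bseq_strictMono (A := A)).monotone (le_of_lt hlt)
      omega
    · have := bseq_le hhyp n k hge
      have := hnth k
      omega
  -- the interval array
  have hif : TotRecIn O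
      (fun m : ℕ => max ((Nat.unpair m).2 + 1) ((M (Nat.unpair m).2 + (Nat.unpair m).2 + C) + 1)) := by
    have h1 : TotRecIn O (fun m : ℕ => (Nat.unpair m).2) :=
      TotRecIn.of_computable ((Primrec.snd.comp Primrec.unpair).to_comp)
    have h2 : TotRecIn O (fun m : ℕ => (Nat.unpair m).2 + 1) :=
      (TotRecIn.of_computable Computable.succ).comp h1
    have h3 : TotRecIn O (fun m : ℕ => (M (Nat.unpair m).2 + (Nat.unpair m).2 + C) + 1) := by
      have := (hD.comp h1)
      exact (TotRecIn.of_computable Computable.succ).comp this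
    exact h2.max2 h3
  obtain ⟨h, hh, h0, hsucc⟩ := totRecIn_rec 0 hif
  have hmono : ∀ k, h k < h (k + 1) := by
    intro k; rw [hsucc k]; simp only [Nat.unpair_pair]; omega
  have hd2 : ∀ k, Nat.nth (· ∈ BSet A) (h k) < h (k + 1) := by
    intro k
    rw [nth_BSet, hsucc k]
    simp only [Nat.unpair_pair]
    have := hDdom (h k)
    omega
  obtain ⟨hdisj, htr⟩ := interval_array_spec BSet_infinite hmono hd2
  exact ⟨_, computableIn_Ico_array hh, hdisj, htr⟩

end Construction


/-- Combining countably many co-c.e. hyperimmune sets into a single hyperimmune set. -/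
theorem countable_coCE_hyperimmune_combine (A : ℕ → Set ℕ)
    (hco : ∀ n, CoCE (A n)) (hhyp : ∀ n, Hyperimmune (A n)) :
    ∃ B : Set ℕ, Hyperimmune B ∧
      (∀ (X : Set ℕ) (n : ℕ) (F : ℕ → Finset ℕ),
        OracleComputableIn (CharFun X) F → ArrayDisjoint F → Traces F (A n) →
        ∃ G : ℕ → Finset ℕ, OracleComputableIn (CharFun X) G ∧ ArrayDisjoint G ∧ Traces G B) ∧
      (∀ X : Set ℕ, HyperimmuneIn (CharFun X) B → ∀ n, HyperimmuneIn (CharFun X) (A n)) := by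
  refine ⟨BSet A, BSet_hyperimmune hco hhyp, ?_, ?_⟩
  · intro X n F hF hd ht
    exact BSet_transfer hhyp (CharFun X) n hF hd ht
  · intro X hX n
    refine ⟨(hhyp n).1, fun F hF hd ht => ?_⟩
    obtain ⟨G, hG, hGd, hGt⟩ := BSet_transfer hhyp (CharFun X) n hF hd ht
    exact hX.2 G hG hGd hGt
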